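/- arXiv:0909.0774 — 6 statements merged into one kernel-verified Lean document; each statement's English description precedes it below -/
import Mathlib

section
/- In a free group, commutation is transitive through nontrivial elements: if x, y, z are elements of a free group with y ≠ 1, x commutes with y, and y commutes with z, then x commutes with z. -/
open FreeGroup

private lemma cons_eq_append_replicate {β : Type*} (a : β) :
    ∀ (L : List β), a :: L = L ++ [a] → L = List.replicate L.length a := by
  intro L
  induction L with
  | nil => intro _; rfl
  | cons b M ih =>
    intro h
    rw [List.cons_append] at h
    injection h with h1 h2
    subst h1
    rw [List.length_cons, List.replicate_succ]
    exact congrArg (a :: ·) (ih h2)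

private lemma reduce_cons_cons {γ : Type*} [DecidableEq γ] (x y : γ × Bool) (T : List (γ × Bool))
    (h : FreeGroup.reduce (y :: T) = y :: T) :
    FreeGroup.reduce (x :: y :: T) =
      if x.1 = y.1 ∧ x.2 = !y.2 then T else x :: y :: T := by
  rw [FreeGroup.reduce.cons, h]

private lemma head_zpow {γ : Type*} [DecidableEq γ] (i : γ) (m : ℤ) (hm : m ≠ 0) :
    ∃ s, ((FreeGroup.of i ^ m : FreeGroup γ)).toWord.head? = some (i, s) := by
  rcases lt_trichotomy m 0 with h | h | h
  · obtain ⟨n, rfl⟩ : ∃ n : ℕ, m = -((n + 1 : ℕ) : ℤ) := ⟨(-m).toNat - 1, by omega⟩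
    refine ⟨false, ?_⟩
    rw [zpow_neg, zpow_natCast, toWord_inv, toWord_of_pow]
    have : invRev (List.replicate (n + 1) (i, true)) = List.replicate (n + 1) (i, false) := by
      simp [invRev]
    rw [this, List.replicate_succ]
    rfl
  · exact absurd h hm
  · obtain ⟨n, rfl⟩ : ∃ n : ℕ, m = ((n + 1 : ℕ) : ℤ) := ⟨m.toNat - 1, by omega⟩
    refine ⟨true, ?_⟩
    rw [zpow_natCast, toWord_of_pow, List.replicate_succ]
    rfl

private lemma freeGroup_comm_of_gen {γ : Type*} [DecidableEq γ] (i : γ) :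
    ∀ (n : ℕ) (u : FreeGroup γ), u.toWord.length = n →
      u * FreeGroup.of i = FreeGroup.of i * u → ∃ m : ℤ, u = FreeGroup.of i ^ m := by
  intro n
  induction n using Nat.strong_induction_on with
  | _ n ih =>
    intro u hlen hcomm
    have hred : reduce u.toWord = u.toWord := reduce_toWord u
    have hu : FreeGroup.mk u.toWord = u := mk_toWord
    have hof : (FreeGroup.of i : FreeGroup γ) = FreeGroup.mk [(i, true)] := rfl
    have hofinv : (FreeGroup.of i : FreeGroup γ)⁻¹ = FreeGroup.mk [(i, false)] := by
      rw [hof, inv_mk]; rfl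
    have h1 : (FreeGroup.of i * u).toWord = reduce ((i, true) :: u.toWord) := by
      conv_lhs => rw [hof, ← hu, mul_mk]
      rw [toWord_mk]
      rfl
    have hMred : reduce (invRev u.toWord) = invRev u.toWord := by
      rw [reduce_invRev, hred]
    have h2 : (u * FreeGroup.of i).toWord = invRev (reduce ((i, false) :: invRev u.toWord)) := by
      have e1 : (u * FreeGroup.of i)⁻¹ = FreeGroup.mk ((i, false) :: invRev u.toWord) := by
        conv_lhs => rw [mul_inv_rev, hofinv, ← hu, inv_mk, mul_mk]
        rfl
      have e2 : (u * FreeGroup.of i)⁻¹.toWord = reduce ((i, false) :: invRev u.toWord) := by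
        rw [e1, toWord_mk]
      have e3 := congrArg invRev e2
      rwa [toWord_inv, invRev_invRev] at e3
    have heq : invRev (reduce ((i, false) :: invRev u.toWord))
        = reduce ((i, true) :: u.toWord) := by
      rw [← h1, ← h2, hcomm]
    -- case on u.toWord
    rcases hn : u.toWord with _ | ⟨⟨a, s⟩, T⟩
    · exact ⟨0, by rw [← hu, hn]; rfl⟩
    rcases hm : invRev u.toWord with _ | ⟨⟨b, t⟩, S⟩
    · exfalso
      have := invRev_length (L₁ := u.toWord)
      rw [hm, hn] at this
      simp at this
    by_cases hA : (a, s) = ((i, false) : γ × Bool)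
    · -- head of u cancels with (i, true): recurse on (of i) * u
      rw [hA] at hn
      have hT : (FreeGroup.of i * u).toWord = T := by
        rw [h1, hn, reduce_cons_cons _ _ _ (hn ▸ hred)]
        simp
      have hcomm' : (FreeGroup.of i * u) * FreeGroup.of i
          = FreeGroup.of i * (FreeGroup.of i * u) := by
        rw [mul_assoc, hcomm]
      have hlt : T.length < n := by
        rw [hn] at hlen; simp at hlen; omega
      obtain ⟨m, hmeq⟩ := ih T.length hlt (FreeGroup.of i * u) (by rw [hT]) hcomm'
      refine ⟨-1 + m, ?_⟩
      have : u = (FreeGroup.of i)⁻¹ * (FreeGroup.of i * u) := by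
        rw [inv_mul_cancel_left]
      rw [this, hmeq, zpow_add, zpow_neg_one]
    · by_cases hB : (b, t) = ((i, true) : γ × Bool)
      · -- tail of u cancels with (i, true): recurse on u * (of i)
        rw [hB] at hm
        have hS : (u * FreeGroup.of i).toWord = invRev S := by
          rw [h2, hm, reduce_cons_cons _ _ _ (hm ▸ hMred)]
          simp
        have hcomm' : (u * FreeGroup.of i) * FreeGroup.of i
            = FreeGroup.of i * (u * FreeGroup.of i) := by
          rw [← mul_assoc, ← hcomm]
        have hlt : (invRev S).length < n := by
          have h := invRev_length (L₁ := u.toWord)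
          rw [hm, hlen] at h
          rw [invRev_length]
          simp at h
          omega
        obtain ⟨m, hmeq⟩ := ih (invRev S).length hlt (u * FreeGroup.of i) (by rw [hS]) hcomm'
        refine ⟨m + -1, ?_⟩
        have : u = (u * FreeGroup.of i) * (FreeGroup.of i)⁻¹ := by
          rw [mul_inv_cancel_right]
        rw [this, hmeq, zpow_add, zpow_neg_one]
      · -- no cancellation on either side: u is a power of (of i)
        have hr1 : reduce ((i, true) :: u.toWord) = (i, true) :: u.toWord := by
          rw [hn, reduce_cons_cons _ _ _ (hn ▸ hred), if_neg]
          rintro ⟨rfl, h2'⟩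
          apply hA
          cases s
          · rfl
          · simp at h2'
        have hr2 : reduce ((i, false) :: invRev u.toWord) = (i, false) :: invRev u.toWord := by
          rw [hm, reduce_cons_cons _ _ _ (hm ▸ hMred), if_neg]
          rintro ⟨rfl, h2'⟩
          apply hB
          cases t
          · simp at h2'
          · rfl
        rw [hr1, hr2] at heq
        have hinv : invRev ((i, false) :: invRev u.toWord) = u.toWord ++ [(i, true)] := by
          simp [invRev, Function.comp_def]
        rw [hinv] at heq
        have hrep := cons_eq_append_replicate ((i, true) : γ × Bool) u.toWord heq.symm
        refine ⟨(n : ℤ), ?_⟩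
        apply toWord_injective
        rw [zpow_natCast, toWord_of_pow, hrep, hlen]

private lemma freeGroup_comm_of_central {γ : Type*} (w : FreeGroup γ) (hw : w ≠ 1)
    (hc : ∀ v : FreeGroup γ, w * v = v * w) (u v : FreeGroup γ) : u * v = v * u := by
  classical
  have hsub : ∀ i j : γ, i = j := by
    intro i j
    obtain ⟨m, hm⟩ := freeGroup_comm_of_gen i w.toWord.length w rfl (hc (FreeGroup.of i))
    obtain ⟨k, hk⟩ := freeGroup_comm_of_gen j w.toWord.length w rfl (hc (FreeGroup.of j))
    have hm0 : m ≠ 0 := by rintro rfl; rw [zpow_zero] at hm; exact hw hm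
    have hk0 : k ≠ 0 := by rintro rfl; rw [zpow_zero] at hk; exact hw hk
    obtain ⟨s, hs⟩ := head_zpow i m hm0
    obtain ⟨t, ht⟩ := head_zpow j k hk0
    rw [← hm] at hs
    rw [← hk] at ht
    rw [hs] at ht
    injection ht with ht'
    exact congrArg Prod.fst ht'
  rcases isEmpty_or_nonempty γ with hE | ⟨⟨i⟩⟩
  · exfalso
    apply hw
    rw [← toWord_eq_nil_iff]
    rcases h : w.toWord with _ | ⟨p, _⟩
    · rfl
    · exact isEmptyElim p.1
  · have hgen : ∀ a : FreeGroup γ, ∃ m : ℤ, a = FreeGroup.of i ^ m := by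
      intro a
      induction a using FreeGroup.induction_on with
      | C1 => exact ⟨0, by rw [zpow_zero]⟩
      | of x => exact ⟨1, by rw [zpow_one, hsub x i]⟩
      | inv_of x _ =>
        exact ⟨-1, by rw [zpow_neg_one, hsub x i]⟩
      | mul a b ha hb =>
        obtain ⟨m1, h1⟩ := ha
        obtain ⟨m2, h2⟩ := hb
        exact ⟨m1 + m2, by rw [h1, h2, zpow_add]⟩
    obtain ⟨m1, h1⟩ := hgen u
    obtain ⟨m2, h2⟩ := hgen v
    rw [h1, h2, ← zpow_add, ← zpow_add, add_comm]

theorem freeGroup_commute_trans {α : Type*} (x y z : FreeGroup α)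
    (hy : y ≠ 1) (hxy : x * y = y * x) (hyz : y * z = z * y) :
    x * z = z * x := by
  classical
  set C := Subgroup.centralizer ({y} : Set (FreeGroup α)) with hC
  have hxC : x ∈ C := Subgroup.mem_centralizer_iff.mpr (by
    rintro g hg
    rw [Set.mem_singleton_iff] at hg
    subst hg
    exact hxy.symm)
  have hyC : y ∈ C := Subgroup.mem_centralizer_iff.mpr (by
    rintro g hg
    rw [Set.mem_singleton_iff] at hg
    subst hg
    rfl)
  have hzC : z ∈ C := Subgroup.mem_centralizer_iff.mpr (by
    rintro g hg
    rw [Set.mem_singleton_iff] at hg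
    subst hg
    exact hyz)
  obtain ⟨ι, ⟨b⟩⟩ := (inferInstance : IsFreeGroup C).nonempty_basis
  set e : C ≃* FreeGroup ι := b.repr with he
  set w : FreeGroup ι := e ⟨y, hyC⟩ with hwdef
  have hw : w ≠ 1 := by
    intro h
    apply hy
    have : (⟨y, hyC⟩ : C) = 1 := e.injective (by rw [← hwdef, h, _root_.map_one])
    exact congrArg Subtype.val this
  have hcent : ∀ v : FreeGroup ι, w * v = v * w := by
    intro v
    apply e.symm.injective
    rw [_root_.map_mul, _root_.map_mul, hwdef, MulEquiv.symm_apply_apply]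
    have hmem : (↑(e.symm v) : FreeGroup α) ∈ Subgroup.centralizer ({y} : Set (FreeGroup α)) :=
      (e.symm v).2
    rw [Subgroup.mem_centralizer_iff] at hmem
    have := hmem y (Set.mem_singleton y)
    ext
    exact this
  have hcomm := freeGroup_comm_of_central w hw hcent (e ⟨x, hxC⟩) (e ⟨z, hzC⟩)
  have : (⟨x, hxC⟩ * ⟨z, hzC⟩ : C) = ⟨z, hzC⟩ * ⟨x, hxC⟩ := by
    apply e.injective
    rw [_root_.map_mul, _root_.map_mul, hcomm]
  exact congrArg Subtype.val this
end

section
/- The centralizer of a nontrivial element of a free group is infinite cyclic: for every s ≠ 1 in a free group F, there exists z ∈ F such that the centralizer of s in F equals the cyclic subgroup generated by z. -/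
open FreeGroup

/-- Key combinatorial lemma: if `z ≠ 1` in a free group and the first letter of its reduced
word involves a generator different from `d`, then `z` does not commute with `of d`. -/
lemma freeGroup_key {ι : Type*} [DecidableEq ι] {z : FreeGroup ι} {d : ι}
    (hz : z ≠ 1) (hd : ∀ p ∈ z.toWord.head?, p.1 ≠ d)
    (hc : Commute z (FreeGroup.of d)) : False := by
  have hwne : z.toWord ≠ [] := by simpa [FreeGroup.toWord_eq_nil_iff] using hz
  obtain ⟨p, t, hpt⟩ := List.exists_cons_of_ne_nil hwne
  have hp : p.1 ≠ d := hd p (by rw [hpt]; rfl)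
  have hred : FreeGroup.reduce z.toWord = z.toWord := z.reduce_toWord
  have hmkw : FreeGroup.mk z.toWord = z := z.mk_toWord
  have heq : FreeGroup.reduce ((d, true) :: z.toWord)
      = FreeGroup.reduce (z.toWord ++ [(d, true)]) := by
    apply FreeGroup.reduce.sound
    rw [show ((d, true) :: z.toWord = [(d, true)] ++ z.toWord) from rfl,
      ← FreeGroup.mul_mk, ← FreeGroup.mul_mk, hmkw]
    exact hc.eq.symm
  -- LHS is already reduced since the head of the word is not a letter of `d`
  have hL : FreeGroup.reduce ((d, true) :: z.toWord) = (d, true) :: z.toWord := by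
    rw [FreeGroup.reduce.cons, hred, hpt]
    have : ¬ ((d, true).1 = p.1 ∧ (d, true).2 = !p.2) := by
      rintro ⟨h, -⟩
      exact hp h.symm
    simp only [this, if_false]
  -- equal lengths force the RHS to be the unreduced word
  have hR : FreeGroup.reduce (z.toWord ++ [(d, true)]) = z.toWord ++ [(d, true)] := by
    have hsub : List.Sublist (FreeGroup.reduce (z.toWord ++ [(d, true)]))
        (z.toWord ++ [(d, true)]) :=
      (FreeGroup.reduce.red (L := z.toWord ++ [(d, true)])).sublist
    apply hsub.eq_of_length
    rw [← heq, hL]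
    simp
  rw [hL, hR, hpt] at heq
  obtain ⟨h', -⟩ := List.cons.inj heq
  exact hp (congrArg Prod.fst h'.symm)

theorem freeGroup_centralizer_cyclic {α : Type*} (s : FreeGroup α) (hs : s ≠ 1) :
    ∃ z : FreeGroup α, Subgroup.centralizer {s} = Subgroup.zpowers z := by
  classical
  have hsH : s ∈ Subgroup.centralizer {s} := by
    rw [Subgroup.mem_centralizer_iff]
    rintro h rfl
    rfl
  let H : Subgroup (FreeGroup α) := Subgroup.centralizer {s}
  let ι := IsFreeGroup.Generators H
  let e : H ≃* FreeGroup ι := IsFreeGroup.toFreeGroup H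
  let s' : H := ⟨s, hsH⟩
  have hs'1 : s' ≠ 1 := fun h => hs (congrArg Subtype.val h)
  let z₀ : FreeGroup ι := e s'
  have hz₀1 : z₀ ≠ 1 := by
    intro h
    exact hs'1 (e.injective (h.trans (_root_.map_one e).symm))
  -- z₀ commutes with everything in FreeGroup ι
  have hcomm : ∀ g : FreeGroup ι, Commute z₀ g := by
    intro g
    have hmem : (e.symm g : FreeGroup α) ∈ Subgroup.centralizer {s} := (e.symm g).2
    rw [Subgroup.mem_centralizer_iff] at hmem
    have h0 : Commute s' (e.symm g) := Subtype.ext (hmem s rfl)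
    have := h0.map e.toMonoidHom
    simpa using this
  have hwne : z₀.toWord ≠ [] := by simpa [FreeGroup.toWord_eq_nil_iff] using hz₀1
  obtain ⟨p, t, hpt⟩ := List.exists_cons_of_ne_nil hwne
  -- ι is a subsingleton
  have hιsub : Subsingleton ι := by
    constructor
    intro a b
    by_contra hab
    set d : ι := if p.1 = a then b else a with hd
    have hpd : p.1 ≠ d := by
      rw [hd]
      split_ifs with h
      · rw [h]; exact hab
      · exact h
    exact freeGroup_key hz₀1 (fun q hq => by
      rw [hpt] at hq
      simp only [List.head?_cons, Option.mem_def, Option.some.injEq] at hq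
      rw [← hq]; exact hpd) (hcomm _)
  -- FreeGroup ι = zpowers (of p.1)
  have htop : Subgroup.zpowers (FreeGroup.of p.1 : FreeGroup ι) = ⊤ := by
    rw [eq_top_iff, ← FreeGroup.closure_range_of ι]
    apply Subgroup.closure_le _ |>.mpr
    rintro x ⟨i, rfl⟩
    have : i = p.1 := Subsingleton.elim i p.1
    rw [this]
    exact Subgroup.mem_zpowers _
  refine ⟨(e.symm (FreeGroup.of p.1) : FreeGroup α), ?_⟩
  apply le_antisymm
  · intro g hg
    have hmem : e ⟨g, hg⟩ ∈ Subgroup.zpowers (FreeGroup.of p.1 : FreeGroup ι) := by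
      rw [htop]; trivial
    obtain ⟨n, hn⟩ := hmem
    refine ⟨n, ?_⟩
    have h3 : e.symm ((FreeGroup.of p.1 : FreeGroup ι) ^ n) = ⟨g, hg⟩ := by
      have := congrArg e.symm hn
      simpa using this
    have hval := congrArg Subtype.val h3
    rw [map_zpow] at hval
    simpa using hval
  · rw [Subgroup.zpowers_le]
    exact (e.symm (FreeGroup.of p.1)).2
end

section
/- Fix an integer m ≥ 1 and a free group F. Define a relation on the set of pairs {(x, y) ∈ F × F : y ≠ 1} by: (x₁, y₁) ∼ (x₂, y₂) if and only if y₁*y₂ = y₂*y₁ and there exists y ∈ F with y*y₁ = y₁*y and x₁*x₂⁻¹ = y^m. Then ∼ is an equivalence relation. -/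
namespace FGAux

open FreeGroup List

variable {α : Type*}

/-- "No cancellation" relation between adjacent letters. -/
def NC (a b : α × Bool) : Prop := ¬(a.1 = b.1 ∧ a.2 = !b.2)

variable [DecidableEq α]

lemma reduce_eq_self_of_chain' : ∀ {L : List (α × Bool)},
    List.Chain' NC L → FreeGroup.reduce L = L := by
  intro L
  induction L with
  | nil => intro _; rfl
  | cons a t ih =>
    intro h
    rw [FreeGroup.reduce.cons, ih h.tail]
    cases t with
    | nil => rfl
    | cons b t2 =>
      have hr : NC a b := (List.isChain_cons_cons.mp h).1
      show (if a.1 = b.1 ∧ a.2 = !b.2 then t2 else a :: b :: t2) = a :: b :: t2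
      rw [if_neg hr]

lemma chain'_of_reduce_eq_self : ∀ {L : List (α × Bool)},
    FreeGroup.reduce L = L → List.Chain' NC L := by
  intro L
  induction L with
  | nil => intro _; exact List.isChain_nil
  | cons a t ih =>
    intro h
    rw [FreeGroup.reduce.cons] at h
    rcases ht : FreeGroup.reduce t with _ | ⟨b, t2⟩
    · rw [ht] at h
      have : t = [] := by
        have := congrArg List.length h
        simp at this
        exact this
      subst this; exact List.isChain_singleton _
    · rw [ht] at h
      have h' : (if a.1 = b.1 ∧ a.2 = !b.2 then t2 else a :: b :: t2) = a :: t := h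
      clear h
      by_cases hc : a.1 = b.1 ∧ a.2 = !b.2
      · rw [if_pos hc] at h'
        have h1 : (FreeGroup.reduce t).length ≤ t.length :=
          (FreeGroup.reduce.red (L := t)).length_le
        have h2 := congrArg List.length h'
        rw [ht] at h1
        simp at h1 h2
        omega
      · rw [if_neg hc] at h'
        have h2 : t = b :: t2 := by
          have := List.tail_eq_of_cons_eq h'
          exact this.symm
        subst h2
        exact List.isChain_cons_cons.mpr ⟨hc, ih ht⟩


lemma eq_one_of_central {x y : α} (hxy : x ≠ y) (z : FreeGroup α)
    (hz : ∀ g, g * z = z * g) : z = 1 := by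
  by_contra h1
  have hLne : z.toWord ≠ [] := fun h => h1 (FreeGroup.toWord_eq_nil_iff.mp h)
  obtain ⟨hd, t, hLd⟩ := List.exists_cons_of_ne_nil hLne
  set L := z.toWord with hL
  set lst := L.getLast hLne with hlst
  set g : α := if lst.1 = x then y else x with hg
  have hglast : g ≠ lst.1 := by
    by_cases hxl : lst.1 = x
    · simp only [hg, if_pos hxl, hxl]; exact hxy.symm
    · simp only [hg, if_neg hxl]; exact fun h => hxl h.symm
  set e1 : α × Bool := (g, hd.2) with he1
  set e2 : α × Bool := (g, !hd.2) with he2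
  set w : FreeGroup α := FreeGroup.mk [e2] with hwdef
  have hzL : z = FreeGroup.mk L := (FreeGroup.mk_toWord).symm
  have hw : w⁻¹ * z * w = z := by
    have h := hz w
    calc w⁻¹ * z * w = w⁻¹ * (z * w) := by rw [mul_assoc]
    _ = w⁻¹ * (w * z) := by rw [← h]
    _ = z := by group
  have hwinv : w⁻¹ = FreeGroup.mk [e1] := by
    rw [hwdef, FreeGroup.inv_mk]
    congr 1
    simp [FreeGroup.invRev, he1, he2]
  have hbig : w⁻¹ * z * w = FreeGroup.mk (e1 :: L ++ [e2]) := by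
    rw [hwinv, hzL, FreeGroup.mul_mk, FreeGroup.mul_mk]
    congr 1
  have hCL : List.Chain' NC L := chain'_of_reduce_eq_self (FreeGroup.reduce_toWord z)
  have hchain : List.Chain' NC (e1 :: L ++ [e2]) := by
    have htail : List.Chain' NC (L ++ [e2]) := by
      refine List.isChain_append.mpr ⟨hCL, List.isChain_singleton _, ?_⟩
      intro p hp q hq
      rw [List.getLast?_eq_getLast hLne] at hp
      simp only [Option.mem_def, Option.some.injEq] at hp
      simp only [List.head?_cons, Option.mem_def, Option.some.injEq] at hq
      subst hp hq
      exact fun hcon => hglast hcon.1.symm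
    refine List.isChain_cons.mpr ⟨?_, htail⟩
    intro p hp
    rw [show L.append [e2] = hd :: (t ++ [e2]) by rw [hLd]; rfl] at hp
    simp only [List.head?_cons, Option.mem_def, Option.some.injEq] at hp
    subst hp
    intro hcon
    simp [he1] at hcon
  have hred : FreeGroup.reduce (e1 :: L ++ [e2]) = e1 :: L ++ [e2] :=
    reduce_eq_self_of_chain' hchain
  have hfin : z.toWord = e1 :: L ++ [e2] := by
    conv_lhs => rw [← hw]
    rw [hbig, FreeGroup.toWord_mk, hred]
  have := congrArg List.length hfin
  simp [← hL] at this
  omega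


lemma replicate_of_chain' (hs : ∀ u v : α, u = v) (x₀ : α) :
    ∀ L : List (α × Bool), List.Chain' NC L →
      ∃ (n : ℕ) (bb : Bool), L = List.replicate n (x₀, bb) := by
  intro L
  induction L with
  | nil => exact fun _ => ⟨0, true, rfl⟩
  | cons a t ih =>
    obtain ⟨a1, a2⟩ := a
    intro h
    obtain ⟨n, bb, ht⟩ := ih h.tail
    have ha1 : a1 = x₀ := hs _ _
    cases n with
    | zero =>
      simp only [List.replicate] at ht
      subst ht
      exact ⟨1, a2, by simp [List.replicate, ha1]⟩
    | succ n =>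
      rw [List.replicate_succ] at ht
      have hnc : NC (a1, a2) (x₀, bb) := by
        rw [ht] at h
        exact (List.isChain_cons_cons.mp h).1
      have ha2 : a2 = bb := by
        simp only [NC] at hnc
        cases a2 <;> cases bb <;> simp_all
      refine ⟨n + 2, bb, ?_⟩
      rw [ht, List.replicate_succ, List.replicate_succ, ha1, ha2]

lemma mk_replicate (x₀ : α) (n : ℕ) (bb : Bool) :
    ∃ k : ℤ, FreeGroup.mk (List.replicate n (x₀, bb)) = FreeGroup.of x₀ ^ k := by
  cases bb
  · refine ⟨-(n : ℤ), ?_⟩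
    have h1 : FreeGroup.invRev (List.replicate n (x₀, true)) = List.replicate n (x₀, false) := by
      simp [FreeGroup.invRev]
    rw [← h1, ← FreeGroup.inv_mk, show FreeGroup.mk (List.replicate n (x₀, true)) = FreeGroup.of x₀ ^ n from by
      rw [← FreeGroup.toWord_of_pow x₀ n, FreeGroup.mk_toWord]]
    rw [zpow_neg, zpow_natCast]
  · refine ⟨(n : ℤ), ?_⟩
    rw [show FreeGroup.mk (List.replicate n (x₀, true)) = FreeGroup.of x₀ ^ n from by
      rw [← FreeGroup.toWord_of_pow x₀ n, FreeGroup.mk_toWord], zpow_natCast]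

lemma commute_of_subsingleton (hs : ∀ u v : α, u = v) (b c : FreeGroup α) :
    b * c = c * b := by
  rcases isEmpty_or_nonempty α with hE | hN
  · have h1 : ∀ wd : FreeGroup α, wd = 1 := by
      intro wd
      rcases h : wd.toWord with _ | ⟨p, _⟩
      · exact FreeGroup.toWord_eq_nil_iff.mp h
      · exact (IsEmpty.false p.1).elim
    rw [h1 b, h1 c]
  · obtain ⟨x₀⟩ := hN
    have key : ∀ wd : FreeGroup α, ∃ k : ℤ, wd = FreeGroup.of x₀ ^ k := by
      intro wd
      have hCL : List.Chain' NC wd.toWord :=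
        chain'_of_reduce_eq_self (FreeGroup.reduce_toWord wd)
      obtain ⟨n, bb, hrep⟩ := replicate_of_chain' hs x₀ wd.toWord hCL
      obtain ⟨k, hk⟩ := mk_replicate x₀ n bb
      exact ⟨k, by rw [← FreeGroup.mk_toWord (x := wd), hrep, hk]⟩
    obtain ⟨kb, hb⟩ := key b
    obtain ⟨kc, hc⟩ := key c
    rw [hb, hc, ← zpow_add, ← zpow_add, add_comm]

lemma freeGroup_commute_of_center (z : FreeGroup α) (hz1 : z ≠ 1)
    (hz : ∀ g, g * z = z * g) (b c : FreeGroup α) : b * c = c * b := by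
  by_cases hβ : ∃ u v : α, u ≠ v
  · obtain ⟨u, v, huv⟩ := hβ
    exact absurd (eq_one_of_central huv z hz) hz1
  · push_neg at hβ
    exact commute_of_subsingleton hβ b c


lemma isFreeGroup_commute_of_center {G : Type*} [Group G] [IsFreeGroup G]
    (z : G) (hz1 : z ≠ 1) (hz : ∀ g, g * z = z * g) (b c : G) : b * c = c * b := by
  classical
  let e := IsFreeGroup.toFreeGroup (G := G)
  have hez : e z ≠ 1 := by
    intro h
    exact hz1 (by simpa using e.injective (h.trans (_root_.map_one e).symm))
  have hcen : ∀ g, g * e z = e z * g := by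
    intro g
    have : g = e (e.symm g) := (e.apply_symm_apply g).symm
    rw [this, ← _root_.map_mul, ← _root_.map_mul, hz]
  have := freeGroup_commute_of_center (e z) hez hcen (e b) (e c)
  have h2 : e (b * c) = e (c * b) := by rw [_root_.map_mul, _root_.map_mul, this]
  exact e.injective h2

lemma commtrans {α : Type*} (a b c : FreeGroup α) (ha : a ≠ 1)
    (hab : a * b = b * a) (hac : a * c = c * a) : b * c = c * b := by
  classical
  set H := Subgroup.closure ({a, b, c} : Set (FreeGroup α)) with hH
  have hsub : ({a, b, c} : Set (FreeGroup α)) ⊆ Subgroup.centralizer {a} := by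
    intro g hg
    rw [SetLike.mem_coe, Subgroup.mem_centralizer_iff]
    intro h hh
    rcases hh with rfl
    rcases hg with rfl | rfl | rfl
    · rfl
    · exact hab
    · exact hac
  have hle : H ≤ Subgroup.centralizer {a} := (Subgroup.closure_le _).mpr hsub
  have haH : a ∈ H := Subgroup.subset_closure (by simp)
  have hbH : b ∈ H := Subgroup.subset_closure (by simp)
  have hcH : c ∈ H := Subgroup.subset_closure (by simp)
  set a' : H := ⟨a, haH⟩
  set b' : H := ⟨b, hbH⟩
  set c' : H := ⟨c, hcH⟩
  have ha' : a' ≠ 1 := fun h => ha (congrArg Subtype.val h)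
  have hcen : ∀ g : H, g * a' = a' * g := by
    rintro ⟨g, hg⟩
    have := hle hg
    rw [Subgroup.mem_centralizer_iff] at this
    have h2 := this a (by simp)
    exact Subtype.ext (by simpa using h2.symm)
  have := isFreeGroup_commute_of_center a' ha' hcen b' c'
  have h3 := congrArg Subtype.val this
  simpa using h3

end FGAux

theorem freeGroup_right_coset_equivalence {α : Type*} (m : ℤ) (hm : 1 ≤ m) :
    Equivalence (fun (p q : {p : FreeGroup α × FreeGroup α // p.2 ≠ 1}) =>
      p.1.2 * q.1.2 = q.1.2 * p.1.2 ∧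
        ∃ y : FreeGroup α, y * p.1.2 = p.1.2 * y ∧ p.1.1 * (q.1.1)⁻¹ = y ^ m) := by
  constructor
  · intro p
    exact ⟨rfl, 1, by rw [one_mul, mul_one], by rw [mul_inv_cancel, one_zpow]⟩
  · rintro p q ⟨h1, y, hy, hx⟩
    refine ⟨h1.symm, y⁻¹, ?_, ?_⟩
    · have hyq : q.1.2 * y = y * q.1.2 :=
        FGAux.commtrans p.1.2 q.1.2 y p.2 h1 hy.symm
      exact ((show Commute q.1.2 y from hyq).inv_right).eq.symm
    · rw [inv_zpow, ← hx]
      simp [mul_inv_rev]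
  · rintro p q r ⟨h1, y, hy, hx⟩ ⟨h2, z, hz, hx2⟩
    have hz1 : z * p.1.2 = p.1.2 * z :=
      FGAux.commtrans q.1.2 z p.1.2 q.2 hz.symm h1.symm
    have hyz : y * z = z * y :=
      FGAux.commtrans p.1.2 y z p.2 hy.symm hz1.symm
    refine ⟨FGAux.commtrans q.1.2 p.1.2 r.1.2 q.2 h1.symm h2, y * z, ?_, ?_⟩
    · calc y * z * p.1.2 = y * (z * p.1.2) := by rw [mul_assoc]
      _ = y * (p.1.2 * z) := by rw [hz1]
      _ = y * p.1.2 * z := by rw [mul_assoc]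
      _ = p.1.2 * y * z := by rw [hy]
      _ = p.1.2 * (y * z) := by rw [mul_assoc]
    · have : p.1.1 * (r.1.1)⁻¹ = (p.1.1 * (q.1.1)⁻¹) * (q.1.1 * (r.1.1)⁻¹) := by
        group
      rw [this, hx, hx2, ← (show Commute y z from hyz).mul_zpow m]
end

section
/- Fix integers m₁, m₂ ≥ 1 and a free group F. Define a relation on the set of triples {(y, x, z) ∈ F³ : y ≠ 1, z ≠ 1} by: (y₁, x₁, z₁) ∼ (y₂, x₂, z₂) if and only if y₁*y₂ = y₂*y₁, z₁*z₂ = z₂*z₁, and there exist y, z ∈ F with y*y₁ = y₁*y, z*z₁ = z₁*z, and y^{m₁} * x₁ * z^{m₂} = x₂. Then ∼ is an equivalence relation. -/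
open FreeGroup

namespace FGCT

variable {β : Type*}

/-- Adjacent letters are not mutually inverse. -/
def NoInv (a b : β × Bool) : Prop := ¬(a.1 = b.1 ∧ a.2 = !b.2)

variable [DecidableEq β]

lemma reduce_eq_self_of_chain' :
    ∀ {L : List (β × Bool)}, List.Chain' NoInv L → FreeGroup.reduce L = L
  | [], _ => rfl
  | x :: L, h => by
    have hL : FreeGroup.reduce L = L := reduce_eq_self_of_chain' h.tail
    rw [FreeGroup.reduce.cons, hL]
    cases L with
    | nil => rfl
    | cons hd tl =>
      have hx : NoInv x hd := (List.isChain_cons_cons.mp h).1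
      simp only []
      rw [if_neg hx]

lemma chain'_of_reduce_eq_self :
    ∀ {L : List (β × Bool)}, FreeGroup.reduce L = L → List.Chain' NoInv L
  | [], _ => List.isChain_nil
  | x :: L, h => by
    rw [FreeGroup.reduce.cons] at h
    cases hr : FreeGroup.reduce L with
    | nil =>
      rw [hr] at h
      simp only [] at h
      have : L = [] := by
        have := congrArg List.length h
        simp at this
        exact this
      subst this
      exact List.isChain_singleton x
    | cons hd tl =>
      rw [hr] at h
      simp only [] at h
      by_cases hc : x.1 = hd.1 ∧ x.2 = !hd.2
      · rw [if_pos hc] at h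
        exfalso
        have h1 : (FreeGroup.reduce L).length ≤ L.length := (FreeGroup.reduce.red).length_le
        rw [hr] at h1
        have h2 := congrArg List.length h
        simp at h1 h2
        omega
      · rw [if_neg hc] at h
        have hL : L = hd :: tl := by
          injection h with h1 h2
          exact h2.symm
        have hred : FreeGroup.reduce L = L := hr.trans hL.symm
        have ih := chain'_of_reduce_eq_self hred
        rw [hL]
        exact List.isChain_cons_cons.mpr ⟨hc, hL ▸ ih⟩

lemma toWord_chain' (w : FreeGroup β) : List.Chain' NoInv w.toWord :=
  chain'_of_reduce_eq_self (FreeGroup.reduce_toWord w)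

lemma toWord_mul_singleton (w : FreeGroup β) (ℓ : β × Bool)
    (h : w.toWord.getLast? ≠ some (ℓ.1, !ℓ.2)) :
    (w * FreeGroup.mk [ℓ]).toWord = w.toWord ++ [ℓ] := by
  conv_lhs => rw [← FreeGroup.mk_toWord (x := w)]
  rw [FreeGroup.mul_mk, FreeGroup.toWord_mk]
  apply reduce_eq_self_of_chain'
  apply List.IsChain.append (toWord_chain' w) (List.isChain_singleton ℓ)
  intro a ha b hb
  have hb' : b = ℓ := by have h' := hb; simp at h'; exact h'.symm
  subst hb'
  intro hcon
  apply h
  have : a = (b.1, !b.2) := Prod.ext hcon.1 hcon.2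
  rw [← this]
  simpa using ha

lemma toWord_singleton_mul (w : FreeGroup β) (ℓ : β × Bool)
    (h : w.toWord.head? ≠ some (ℓ.1, !ℓ.2)) :
    (FreeGroup.mk [ℓ] * w).toWord = ℓ :: w.toWord := by
  conv_lhs => rw [← FreeGroup.mk_toWord (x := w)]
  rw [FreeGroup.mul_mk, FreeGroup.toWord_mk]
  show FreeGroup.reduce (ℓ :: w.toWord) = ℓ :: w.toWord
  apply reduce_eq_self_of_chain'
  apply List.IsChain.append (List.isChain_singleton ℓ) (toWord_chain' w)
  intro a ha b hb
  have ha' : a = ℓ := by have h' := ha; simp at h'; exact h'.symm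
  subst ha'
  intro hcon
  apply h
  have hb2 : (a.1, !a.2) = b := by
    obtain ⟨c1, c2⟩ := hcon
    rw [c1, c2]
    simp
  rw [hb2]
  exact hb

omit [DecidableEq β] in
lemma eq_replicate_of_append :
    ∀ (L : List (β × Bool)) (a : β × Bool), L ++ [a] = a :: L →
      L = List.replicate L.length a
  | [], _, _ => rfl
  | b :: L, a, h => by
    injection h with h1 h2
    subst h1
    have ih := eq_replicate_of_append L b h2
    rw [List.length_cons, List.replicate_succ]
    exact congrArg (b :: ·) ih

lemma central_word (w : FreeGroup β) (hcomm : ∀ g, w * g = g * w) (ℓ : β × Bool)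
    (h1 : w.toWord.head? ≠ some (ℓ.1, !ℓ.2))
    (h2 : w.toWord.getLast? ≠ some (ℓ.1, !ℓ.2)) :
    w.toWord = List.replicate w.toWord.length ℓ := by
  have e : w.toWord ++ [ℓ] = ℓ :: w.toWord := by
    rw [← toWord_mul_singleton w ℓ h2, ← toWord_singleton_mul w ℓ h1, hcomm]
  exact eq_replicate_of_append _ _ e

lemma eq_of_central (w : FreeGroup β) (hw : w ≠ 1) (hcomm : ∀ g, w * g = g * w)
    (s t : β) : s = t := by
  by_contra hst
  have hL : w.toWord ≠ [] := fun h => hw (FreeGroup.toWord_eq_nil_iff.mp h)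
  obtain ⟨h0, hh0⟩ : ∃ x, w.toWord.head? = some x :=
    ⟨w.toWord.head hL, List.head?_eq_head hL⟩
  obtain ⟨la, hla⟩ : ∃ x, w.toWord.getLast? = some x :=
    ⟨w.toWord.getLast hL, List.getLast?_eq_getLast hL⟩
  have key : ∀ ℓ : β × Bool, h0 ≠ (ℓ.1, !ℓ.2) → la ≠ (ℓ.1, !ℓ.2) →
      w.toWord = List.replicate w.toWord.length ℓ := by
    intro ℓ k1 k2
    refine central_word w hcomm ℓ ?_ ?_
    · rw [hh0]; intro hc; exact k1 (Option.some.inj hc)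
    · rw [hla]; intro hc; exact k2 (Option.some.inj hc)
  -- find a good letter
  have good : ∃ ℓ : β × Bool, h0 ≠ (ℓ.1, !ℓ.2) ∧ la ≠ (ℓ.1, !ℓ.2) := by
    by_contra hno
    push_neg at hno
    have d : ∀ x : β × Bool, h0 = x ∨ la = x := by
      intro x
      by_contra hx
      push_neg at hx
      have := hno (x.1, !x.2) (by simpa using hx.1)
      simp at this
      exact hx.2 this
    have d1 := d (s, false)
    have d2 := d (s, true)
    have d3 := d (t, false)
    rcases d1 with d1 | d1 <;> rcases d2 with d2 | d2 <;> rcases d3 with d3 | d3 <;>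
      simp_all
  obtain ⟨ℓ, g1, g2⟩ := good
  have hrep := key ℓ g1 g2
  have hmem : h0 ∈ w.toWord := List.mem_of_mem_head? (by rw [hh0]; rfl)
  have hh0ℓ : h0 = ℓ := List.eq_of_mem_replicate (hrep ▸ hmem)
  have hlamem : la ∈ w.toWord := List.mem_of_mem_getLast? (by rw [hla]; rfl)
  have hlaℓ : la = ℓ := List.eq_of_mem_replicate (hrep ▸ hlamem)
  -- second phase: a generator distinct from ℓ.1
  set v : β := if ℓ.1 = s then t else s with hv
  have hvne : v ≠ ℓ.1 := by
    rw [hv]; split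
    · rename_i hcase; rw [hcase]; exact fun h => hst h.symm
    · rename_i hcase; exact fun h => hcase h.symm
  have hrep2 := key (v, true) (by rw [hh0ℓ]; intro hc; exact hvne (congrArg Prod.fst hc).symm)
    (by rw [hlaℓ]; intro hc; exact hvne (congrArg Prod.fst hc).symm)
  have : h0 = (v, true) := List.eq_of_mem_replicate (hrep2 ▸ hmem)
  exact hvne (congrArg Prod.fst (hh0ℓ.symm.trans this)).symm

omit [DecidableEq β] in
lemma comm_of_subsingleton [Subsingleton β] (x y : FreeGroup β) : x * y = y * x := by
  refine FreeGroup.induction_on x (by simp) (fun a => ?_)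
    (fun a h => ?_) (fun u v hu hv => ?_)
  · refine FreeGroup.induction_on y (by simp) (fun b => ?_)
      (fun b h => ?_) (fun u v hu hv => ?_)
    · rw [Subsingleton.elim a b]
    · exact (Commute.inv_right (h : Commute _ _) : Commute _ _)
    · exact (Commute.mul_right (hu : Commute _ _) (hv : Commute _ _) : Commute _ _)
  · exact (Commute.inv_left (h : Commute _ _) : Commute _ _)
  · exact (Commute.mul_left (hu : Commute _ _) (hv : Commute _ _) : Commute _ _)

omit [DecidableEq β] in
/-- Commutative transitivity of free groups. -/
theorem commute_trans {a b c : FreeGroup β} (ha : a ≠ 1)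
    (hab : a * b = b * a) (hac : a * c = c * a) : b * c = c * b := by
  classical
  set H := Subgroup.centralizer ({a} : Set (FreeGroup β)) with hH
  have haH : a ∈ H := Subgroup.mem_centralizer_iff.mpr (by
    intro g hg; rw [Set.mem_singleton_iff] at hg; rw [hg])
  have hbH : b ∈ H := Subgroup.mem_centralizer_iff.mpr (by
    intro g hg; rw [Set.mem_singleton_iff] at hg; rw [hg]; exact hab)
  have hcH : c ∈ H := Subgroup.mem_centralizer_iff.mpr (by
    intro g hg; rw [Set.mem_singleton_iff] at hg; rw [hg]; exact hac)
  set e := IsFreeGroup.toFreeGroup (G := H) with he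
  set A : FreeGroup (IsFreeGroup.Generators H) := e ⟨a, haH⟩ with hA
  have hcentral : ∀ g, A * g = g * A := by
    intro g
    apply e.symm.injective
    rw [_root_.map_mul, _root_.map_mul, MulEquiv.symm_apply_apply]
    have hmem : (e.symm g : FreeGroup β) ∈ Subgroup.centralizer ({a} : Set (FreeGroup β)) :=
      (e.symm g).2
    exact Subtype.ext (Subgroup.mem_centralizer_iff.mp hmem a (Set.mem_singleton a))
  have hAne : A ≠ 1 := by
    intro hcon
    have : (⟨a, haH⟩ : H) = 1 := e.injective (by rw [← hA, hcon]; exact (_root_.map_one e).symm)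
    exact ha (congrArg Subtype.val this)
  haveI : Subsingleton (IsFreeGroup.Generators H) :=
    ⟨fun s t => eq_of_central A hAne hcentral s t⟩
  have hbc : e ⟨b, hbH⟩ * e ⟨c, hcH⟩ = e ⟨c, hcH⟩ * e ⟨b, hbH⟩ :=
    comm_of_subsingleton _ _
  have : (⟨b, hbH⟩ : H) * ⟨c, hcH⟩ = ⟨c, hcH⟩ * ⟨b, hbH⟩ := by
    apply e.injective
    rw [_root_.map_mul, _root_.map_mul]
    exact hbc
  exact congrArg Subtype.val this

end FGCT

theorem freeGroup_double_coset_equivalence {α : Type*} (m₁ m₂ : ℤ)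
    (hm₁ : 1 ≤ m₁) (hm₂ : 1 ≤ m₂) :
    Equivalence (fun (s t : {t : FreeGroup α × FreeGroup α × FreeGroup α //
        t.1 ≠ 1 ∧ t.2.2 ≠ 1}) =>
      s.1.1 * t.1.1 = t.1.1 * s.1.1 ∧ s.1.2.2 * t.1.2.2 = t.1.2.2 * s.1.2.2 ∧
        ∃ y z : FreeGroup α, y * s.1.1 = s.1.1 * y ∧ z * s.1.2.2 = s.1.2.2 * z ∧
          y ^ m₁ * s.1.2.1 * z ^ m₂ = t.1.2.1) := by
  constructor
  · intro s
    exact ⟨rfl, rfl, 1, 1, by simp, by simp, by simp⟩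
  · rintro s t ⟨h1, h2, y, z, hy, hz, he⟩
    refine ⟨h1.symm, h2.symm, y⁻¹, z⁻¹, ?_, ?_, ?_⟩
    · -- y⁻¹ commutes with t.y
      have hyty : y * t.1.1 = t.1.1 * y :=
        FGCT.commute_trans s.2.1 hy.symm h1
      exact (Commute.inv_left (hyty : Commute _ _) : Commute _ _)
    · have hztz : z * t.1.2.2 = t.1.2.2 * z :=
        FGCT.commute_trans s.2.2 hz.symm h2
      exact (Commute.inv_left (hztz : Commute _ _) : Commute _ _)
    · rw [← he]
      group
  · rintro s t u ⟨h1, h2, y, z, hy, hz, he⟩ ⟨k1, k2, y', z', hy', hz', he'⟩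
    have hsyu : s.1.1 * u.1.1 = u.1.1 * s.1.1 :=
      FGCT.commute_trans t.2.1 h1.symm k1
    have hsz : s.1.2.2 * u.1.2.2 = u.1.2.2 * s.1.2.2 :=
      FGCT.commute_trans t.2.2 h2.symm k2
    refine ⟨hsyu, hsz, y' * y, z' * z, ?_, ?_, ?_⟩
    · -- (y' * y) commutes with s.y
      have hy'sy : y' * s.1.1 = s.1.1 * y' := by
        have := FGCT.commute_trans t.2.1 hy'.symm h1.symm
        exact this
      exact (Commute.mul_left (hy'sy : Commute _ _) (hy : Commute _ _) : Commute _ _)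
    · have hz'sz : z' * s.1.2.2 = s.1.2.2 * z' := by
        have := FGCT.commute_trans t.2.2 hz'.symm h2.symm
        exact this
      exact (Commute.mul_left (hz'sz : Commute _ _) (hz : Commute _ _) : Commute _ _)
    · -- equation
      have hyty : y * t.1.1 = t.1.1 * y :=
        FGCT.commute_trans s.2.1 hy.symm h1
      have hcy : Commute y' y :=
        (FGCT.commute_trans t.2.1 hy'.symm hyty.symm : _)
      have hztz : z * t.1.2.2 = t.1.2.2 * z :=
        FGCT.commute_trans s.2.2 hz.symm h2
      have hcz : Commute z' z :=
        (FGCT.commute_trans t.2.2 hz'.symm hztz.symm : _)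
      rw [hcy.mul_zpow, hcz.mul_zpow, ← he', ← he]
      have hzz : z' ^ m₂ * z ^ m₂ = z ^ m₂ * z' ^ m₂ := hcz.zpow_zpow m₂ m₂
      simp only [mul_assoc, hzz]
end

section
/- The kernel of a group homomorphism from a nonabelian free group to any group is never a nontrivial cyclic subgroup: if F = FreeGroup α with α having at least two elements, f : F → H is a group homomorphism, and s ∈ F is nontrivial, then ker f ≠ ⟨s⟩ (the cyclic subgroup generated by s). -/
open FreeGroup List

namespace FreeGroupKerAux

variable {α : Type*}

/-- The non-cancellation relation on letters: `q` does not cancel `p`. -/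
def NR : (α × Bool) → (α × Bool) → Prop := fun p q => ¬(p.1 = q.1 ∧ q.2 = !p.2)

lemma chain'_of_noDecomp :
    ∀ (M : List (α × Bool)),
    (∀ (S T : List (α × Bool)) (x : α) (b : Bool), M ≠ S ++ (x, b) :: (x, !b) :: T) →
    M.Chain' NR
  | [], _ => List.isChain_nil
  | [p], _ => List.isChain_singleton p
  | (a, b) :: (c, d) :: rest, H => by
      show List.IsChain NR _; rw [List.isChain_cons_cons]
      refine ⟨?_, chain'_of_noDecomp ((c, d) :: rest)
        (fun S T x b' h => H ((a, b) :: S) T x b' (by rw [h]; rfl))⟩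
      rintro ⟨h1, h2⟩
      dsimp at h1 h2
      exact H [] rest a b (by subst h1; subst h2; rfl)

lemma chain'_reduce [DecidableEq α] (M : List (α × Bool)) : (reduce M).Chain' NR :=
  chain'_of_noDecomp _ (fun S T x b h => @FreeGroup.reduce.not α _ False M S T x b h)

lemma reduce_eq_self_of_chain' [DecidableEq α] {M : List (α × Bool)} (h : M.Chain' NR) :
    reduce M = M := by
  have key : ∀ K, Red M K → K = M := by
    intro K hK
    rcases Relation.ReflTransGen.cases_head hK with h' | ⟨L', hstep, -⟩
    · exact h'.symm
    · exfalso
      cases hstep with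
      | @not S T xx bb =>
        have := (List.isChain_append_cons_cons.1 h).2.1
        exact this ⟨rfl, rfl⟩
  exact key _ reduce.red

lemma toWord_chain' [DecidableEq α] (w : FreeGroup α) : w.toWord.Chain' NR := by
  rw [← reduce_toWord]; exact chain'_reduce _

lemma toWord_mk_eq_of_chain' [DecidableEq α] {L : List (α × Bool)} (h : L.Chain' NR) :
    (mk L).toWord = L := by rw [toWord_mk, reduce_eq_self_of_chain' h]

lemma mk_single (a : α) (b : Bool) :
    mk [(a, b)] = (of a) ^ (cond b 1 (-1) : ℤ) := by
  cases b with
  | true => rw [cond, zpow_one]; rfl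
  | false =>
    rw [cond, zpow_neg, zpow_one]
    rw [show (of a : FreeGroup α) = mk [(a, true)] from rfl, inv_mk]
    rfl

lemma norm_mk_le' [DecidableEq α] (L : List (α × Bool)) : norm (mk L) ≤ L.length :=
  FreeGroup.norm_mk_le

/-- The centralizer of a positive power of a generator consists of powers of that
generator. -/
lemma centralizer_pow_of [DecidableEq α] (a : α) (k : ℕ) (hk : k ≠ 0) :
    ∀ N : ℕ, ∀ w : FreeGroup α, norm w ≤ N →
      w * (of a) ^ k = (of a) ^ k * w → ∃ n : ℤ, w = (of a) ^ n := by
  have hzc : ∀ (i j : ℤ), (of a : FreeGroup α) ^ i * (of a) ^ j = (of a) ^ j * (of a) ^ i :=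
    fun i j => by rw [← zpow_add, ← zpow_add, add_comm]
  intro N
  induction N with
  | zero =>
    intro w hw _
    exact ⟨0, by rw [zpow_zero]; exact norm_eq_zero.1 (Nat.le_zero.1 hw)⟩
  | succ N ih =>
    intro w hw hcomm
    have hcommz : w * (of a) ^ (k : ℤ) = (of a) ^ (k : ℤ) * w := by
      rw [zpow_natCast]; exact hcomm
    by_cases hw1 : w = 1
    · exact ⟨0, by rw [zpow_zero, hw1]⟩
    have hLne : w.toWord ≠ [] := fun h => hw1 (toWord_eq_nil_iff.1 h)
    obtain ⟨p, T, hpT⟩ := List.exists_cons_of_ne_nil hLne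
    have hwmk : w = mk w.toWord := mk_toWord.symm
    have hlen : w.toWord.length ≤ N + 1 := hw
    by_cases hpa : p.1 = a
    · -- strip the first letter
      have hsingle : mk [p] = (of a) ^ (cond p.2 1 (-1) : ℤ) := by
        have hp : p = (a, p.2) := by rw [← hpa]
        rw [hp]; exact mk_single a p.2
      have hw2 : (of a) ^ (cond p.2 1 (-1) : ℤ) * mk T = w := by
        rw [← hsingle, mul_mk]
        conv_rhs => rw [hwmk, hpT]
        rfl
      have hn1 : norm (mk T) ≤ N := by
        have h1 : norm (mk T) ≤ T.length := norm_mk_le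
        have h2 : T.length + 1 = w.toWord.length := by rw [hpT]; rfl
        omega
      have hback : mk T = (of a) ^ (-(cond p.2 1 (-1) : ℤ)) * w := by
        rw [← hw2, ← mul_assoc, ← zpow_add, neg_add_cancel, zpow_zero, one_mul]
      have hcomm1 : mk T * (of a) ^ k = (of a) ^ k * mk T := by
        rw [← zpow_natCast (of a) k, hback, mul_assoc, hcommz, ← mul_assoc,
          hzc, mul_assoc]
      obtain ⟨m, hm⟩ := ih (mk T) hn1 hcomm1
      refine ⟨(cond p.2 1 (-1) : ℤ) + m, ?_⟩
      rw [← hw2, hm, zpow_add]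
    · obtain ⟨q, hq⟩ : ∃ q, w.toWord.getLast? = some q :=
        ⟨_, List.getLast?_eq_getLast hLne⟩
      by_cases hqa : q.1 = a
      · -- strip the last letter
        have hsingle : mk [q] = (of a) ^ (cond q.2 1 (-1) : ℤ) := by
          have hp : q = (a, q.2) := by rw [← hqa]
          rw [hp]; exact mk_single a _
        have hw2 : mk w.toWord.dropLast * (of a) ^ (cond q.2 1 (-1) : ℤ) = w := by
          rw [← hsingle, mul_mk, List.dropLast_append_getLast? q hq, ← hwmk]
        have hn1 : norm (mk w.toWord.dropLast) ≤ N := by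
          have h1 : norm (mk w.toWord.dropLast) ≤ w.toWord.dropLast.length := norm_mk_le
          have h2 : w.toWord.dropLast.length = w.toWord.length - 1 := List.length_dropLast
          have h3 : 0 < w.toWord.length := List.length_pos_iff.2 hLne
          omega
        have hback : mk w.toWord.dropLast
            = w * (of a) ^ (-(cond q.2 1 (-1) : ℤ)) := by
          conv_rhs => rw [← hw2]
          rw [mul_assoc, ← zpow_add, add_neg_cancel, zpow_zero, mul_one]
        have hcomm1 : mk w.toWord.dropLast * (of a) ^ k
            = (of a) ^ k * mk w.toWord.dropLast := by
          rw [← zpow_natCast (of a) k, hback, mul_assoc, hzc, ← mul_assoc,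
            hcommz, mul_assoc]
        obtain ⟨m, hm⟩ := ih (mk w.toWord.dropLast) hn1 hcomm1
        refine ⟨m + (cond q.2 1 (-1) : ℤ), ?_⟩
        rw [← hw2, hm, zpow_add]
      · -- contradiction case
        exfalso
        obtain ⟨k', rfl⟩ : ∃ k', k = k' + 1 := ⟨k - 1, by omega⟩
        have hred : w.toWord.Chain' NR := toWord_chain' w
        have hrep : (List.replicate (k' + 1) ((a, true) : α × Bool)).Chain' NR :=
          List.isChain_replicate_of_rel _ (fun h => by simp at h)
        have hrepne : (List.replicate (k' + 1) ((a, true) : α × Bool)) ≠ [] := by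
          simp
        have h1 : (List.replicate (k' + 1) ((a, true) : α × Bool) ++ w.toWord).Chain' NR := by
          apply List.IsChain.append hrep hred
          intro p' hp' q' hq'
          rw [List.getLast?_eq_getLast hrepne, List.getLast_replicate] at hp'
          rw [hpT] at hq'
          simp only [List.head?_cons, Option.mem_some_iff] at hp' hq'
          subst hp'
          rintro ⟨hh, -⟩
          exact hpa (hq' ▸ hh.symm)
        have h2 : (w.toWord ++ List.replicate (k' + 1) ((a, true) : α × Bool)).Chain' NR := by
          apply List.IsChain.append hred hrep
          intro p' hp' q' hq'
          rw [hq] at hp'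
          rw [List.replicate_succ, List.head?_cons] at hq'
          simp only [Option.mem_some_iff] at hp' hq'
          subst hp'
          subst hq'
          rintro ⟨hh, -⟩
          exact hqa hh
        have hofk : ((of a : FreeGroup α)) ^ (k' + 1)
            = mk (List.replicate (k' + 1) ((a, true) : α × Bool)) := by
          rw [← FreeGroup.toWord_of_pow a (k' + 1), mk_toWord]
        have e1 : ((of a : FreeGroup α) ^ (k' + 1) * w).toWord
            = List.replicate (k' + 1) ((a, true) : α × Bool) ++ w.toWord := by
          rw [hofk]
          conv_lhs => rw [hwmk]
          rw [mul_mk]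
          exact toWord_mk_eq_of_chain' h1
        have e2 : (w * (of a : FreeGroup α) ^ (k' + 1)).toWord
            = w.toWord ++ List.replicate (k' + 1) ((a, true) : α × Bool) := by
          rw [hofk]
          conv_lhs => rw [hwmk]
          rw [mul_mk]
          exact toWord_mk_eq_of_chain' h2
        have heq : List.replicate (k' + 1) ((a, true) : α × Bool) ++ w.toWord
            = w.toWord ++ List.replicate (k' + 1) ((a, true) : α × Bool) := by
          rw [← e1, ← e2, hcomm]
        rw [hpT, List.replicate_succ, List.cons_append, List.cons_append] at heq
        have hfst : ((a, true) : α × Bool) = p := by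
          injection heq
        exact hpa (by rw [← hfst])

/-- A nontrivial element of a free group has infinite order (via Nielsen–Schreier). -/
lemma zpow_eq_one_imp {s : FreeGroup α} (hs : s ≠ 1) : ∀ z : ℤ, s ^ z = 1 → z = 0 := by
  classical
  have hfin : ¬IsOfFinOrder s := by
    intro hfo
    have hfin : (Subgroup.zpowers s : Set (FreeGroup α)).Finite := hfo.finite_zpowers
    have : Finite (Subgroup.zpowers s) := hfin
    -- the subgroup is a free group by Nielsen–Schreier
    have hfree : IsFreeGroup (Subgroup.zpowers s) := inferInstance
    set σ := IsFreeGroup.Generators (Subgroup.zpowers s)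
    let e : (Subgroup.zpowers s) ≃* FreeGroup σ := IsFreeGroup.toFreeGroup _
    have : Finite (FreeGroup σ) := Finite.of_equiv _ e.toEquiv
    rcases isEmpty_or_nonempty σ with hσ | hσ
    · have hsub : Subsingleton (FreeGroup σ) := by infer_instance
      have : Subsingleton (Subgroup.zpowers s) := e.toEquiv.subsingleton
      have h1 : (⟨s, Subgroup.mem_zpowers s⟩ : Subgroup.zpowers s)
          = ⟨1, (Subgroup.zpowers s).one_mem⟩ := Subsingleton.elim _ _
      exact hs (Subtype.ext_iff.1 h1)
    · obtain ⟨a⟩ := hσ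
      have hfo' : IsOfFinOrder (FreeGroup.of a) := by
        exact isOfFinOrder_of_finite _
      obtain ⟨n, hn0, hn⟩ := isOfFinOrder_iff_pow_eq_one.1 hfo'
      have : (FreeGroup.of a ^ n).toWord = List.replicate n (a, true) :=
        FreeGroup.toWord_of_pow a n
      rw [hn] at this
      simp only [toWord_one] at this
      have := congrArg List.length this
      simp at this
      omega
  intro z hz
  have hinj : Function.Injective (fun n : ℤ => s ^ n) :=
    injective_zpow_iff_not_isOfFinOrder.2 hfin
  have : s ^ z = s ^ (0 : ℤ) := by rw [hz, zpow_zero]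
  exact hinj this

end FreeGroupKerAux

open FreeGroupKerAux in
theorem freeGroup_ker_ne_cyclic {α : Type*} {H : Type*} [Group H]
    (x y : α) (hxy : x ≠ y) (f : FreeGroup α →* H)
    (s : FreeGroup α) (hs : s ≠ 1) :
    f.ker ≠ Subgroup.zpowers s := by
  classical
  intro h
  have hinf := FreeGroupKerAux.zpow_eq_one_imp hs
  have hker : ∀ g : FreeGroup α, g ∈ f.ker ↔ ∃ k : ℤ, s ^ k = g := by
    intro g; rw [h]; exact Subgroup.mem_zpowers_iff
  have hsker : s ∈ f.ker := (hker s).2 ⟨1, zpow_one s⟩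
  have hnorm : ∀ g : FreeGroup α, ∃ k : ℤ, g * s * g⁻¹ = s ^ k := by
    intro g
    have hmem : g * s * g⁻¹ ∈ f.ker := by
      have : f (g * s * g⁻¹) = 1 := by
        rw [f.map_mul, f.map_mul, f.map_inv, MonoidHom.mem_ker.1 hsker, mul_one,
          mul_inv_cancel]
      exact this
    obtain ⟨k, hk⟩ := (hker _).1 hmem
    exact ⟨k, hk.symm⟩
  have hsign : ∀ g : FreeGroup α, g * s * g⁻¹ = s ∨ g * s * g⁻¹ = s⁻¹ := by
    intro g
    obtain ⟨k, hk⟩ := hnorm g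
    obtain ⟨m, hm⟩ := hnorm g⁻¹
    rw [inv_inv] at hm
    have h1 : s = s ^ (m * k) := by
      have hconj : ∀ (u t : FreeGroup α) (j : ℤ), (u * t * u⁻¹) ^ j = u * t ^ j * u⁻¹ := by
        intro u t j
        have := map_zpow (MulAut.conj u) t j
        simp only [MulAut.conj_apply] at this
        exact this.symm
      calc s = g⁻¹ * (g * s * g⁻¹) * g := by group
        _ = g⁻¹ * s ^ k * g := by rw [hk]
        _ = g⁻¹ * s ^ k * (g⁻¹)⁻¹ := by rw [inv_inv]
        _ = (g⁻¹ * s * (g⁻¹)⁻¹) ^ k := (hconj g⁻¹ s k).symm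
        _ = (s ^ m) ^ k := by rw [inv_inv, hm]
        _ = s ^ (m * k) := by rw [← zpow_mul]
    have h2 : s ^ (m * k - 1) = 1 := by
      rw [zpow_sub, zpow_one, ← h1, mul_inv_cancel]
    have h3 : m * k = 1 := by have := hinf _ h2; omega
    rcases Int.eq_one_or_neg_one_of_mul_eq_one' h3 with ⟨-, hk1⟩ | ⟨-, hk1⟩
    · left; rw [hk, hk1, zpow_one]
    · right; rw [hk, hk1, zpow_neg, zpow_one]
  -- every generator commutes with s
  have key : ∀ a : α, of a * s * (of a)⁻¹ = s := by
    intro a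
    rcases hsign (of a) with h1 | h1
    · exact h1
    exfalso
    have h2 : of a ^ 2 * s * (of a ^ 2)⁻¹ = s := by
      have e1 : of a ^ 2 * s * (of a ^ 2)⁻¹ = of a * (of a * s * (of a)⁻¹) * (of a)⁻¹ := by
        rw [pow_two]; group
      have e2 : of a * s⁻¹ * (of a)⁻¹ = (of a * s * (of a)⁻¹)⁻¹ := by group
      rw [e1, h1, e2, h1, inv_inv]
    have hcomm : s * of a ^ 2 = of a ^ 2 * s := by
      have := h2
      rw [mul_inv_eq_iff_eq_mul] at this
      rw [← this]
    obtain ⟨n, hn⟩ := centralizer_pow_of a 2 (by norm_num) (norm s) s le_rfl hcomm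
    have hcen : of a * s * (of a)⁻¹ = s := by
      rw [hn]
      have : (of a : FreeGroup α) * (of a) ^ n = (of a) ^ n * of a := by
        rw [← zpow_one_add, ← zpow_add_one, add_comm]
      rw [mul_inv_eq_iff_eq_mul, this]
    rw [h1] at hcen
    have hss : s * s = 1 := by
      nth_rewrite 2 [← hcen]
      rw [mul_inv_cancel]
    have hs2 : s ^ (2 : ℤ) = 1 := by
      rw [show (2 : ℤ) = 1 + 1 from rfl, zpow_add, zpow_one, hss]
    have := hinf 2 hs2
    omega
  -- s is a power of both of x and of y
  have hcx : s * of x ^ 1 = of x ^ 1 * s := by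
    rw [pow_one]
    have := key x
    rw [mul_inv_eq_iff_eq_mul] at this
    rw [← this]
  have hcy : s * of y ^ 1 = of y ^ 1 * s := by
    rw [pow_one]
    have := key y
    rw [mul_inv_eq_iff_eq_mul] at this
    rw [← this]
  obtain ⟨n, hn⟩ := centralizer_pow_of x 1 one_ne_zero (norm s) s le_rfl hcx
  obtain ⟨m, hm⟩ := centralizer_pow_of y 1 one_ne_zero (norm s) s le_rfl hcy
  -- exponent-sum homomorphism counting x's
  let φ : FreeGroup α →* Multiplicative ℤ :=
    FreeGroup.lift (fun a => Multiplicative.ofAdd (if a = x then (1 : ℤ) else 0))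
  have e1 : φ s = Multiplicative.ofAdd n := by
    rw [hn, map_zpow]
    have : φ (of x) = Multiplicative.ofAdd (1 : ℤ) := by
      simp [φ, FreeGroup.lift_apply_of]
    rw [this]
    rw [← ofAdd_zsmul]
    norm_num
  have e2 : φ s = Multiplicative.ofAdd 0 := by
    rw [hm, map_zpow]
    have : φ (of y) = Multiplicative.ofAdd (0 : ℤ) := by
      simp [φ, FreeGroup.lift_apply_of, Ne.symm hxy]
    rw [this]
    rw [← ofAdd_zsmul]
    norm_num
  have : n = 0 := by
    have := e1.symm.trans e2
    exact_mod_cast Multiplicative.ofAdd.injective this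
  rw [this, zpow_zero] at hn
  exact hs hn
end

section
/- Maximal cyclic subgroups generated by a basis element of a free group are malnormal in the following sense: if a = FreeGroup.of x is a basis element of F = FreeGroup α, g ∈ F, k is a nonzero integer, and g * a^k * g⁻¹ lies in the cyclic subgroup ⟨a⟩, then g ∈ ⟨a⟩. -/
namespace MalnormalAux

variable {α : Type*} [DecidableEq α]

def Rd (p q : α × Bool) : Prop := ¬(p.1 = q.1 ∧ p.2 = !q.2)

theorem chain'_reduce (L : List (α × Bool)) : List.Chain' Rd (FreeGroup.reduce L) := by
  induction L with
  | nil => exact List.isChain_nil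
  | cons p L ih =>
    rw [FreeGroup.reduce.cons]
    cases h : FreeGroup.reduce L with
    | nil => exact List.isChain_singleton _
    | cons q tl =>
      rw [h] at ih
      by_cases hc : p.1 = q.1 ∧ p.2 = !q.2
      · simpa [hc, List.Chain'] using ih.tail
      · simp only [if_neg hc]
        exact List.isChain_cons_cons.2 ⟨hc, ih⟩

theorem reduce_eq_self_of_chain' {L : List (α × Bool)}
    (h : List.Chain' Rd L) : FreeGroup.reduce L = L := by
  induction L with
  | nil => rfl
  | cons p L ih =>
    rw [FreeGroup.reduce.cons, ih h.tail]
    cases L with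
    | nil => rfl
    | cons q tl => exact if_neg (List.isChain_cons_cons.1 h).1

theorem chain'_toWord (g : FreeGroup α) : List.Chain' Rd g.toWord := by
  have := chain'_reduce g.toWord
  rwa [FreeGroup.reduce_toWord] at this

theorem mem_toWord_zpow_fst (x : α) (l : ℤ) {p : α × Bool}
    (hp : p ∈ ((FreeGroup.of x : FreeGroup α) ^ l).toWord) : p.1 = x := by
  rcases l with n | n
  · rw [Int.ofNat_eq_coe, zpow_natCast, FreeGroup.toWord_of_pow] at hp
    rw [List.eq_of_mem_replicate hp]
  · rw [zpow_negSucc, FreeGroup.toWord_inv, FreeGroup.toWord_of_pow] at hp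
    simp [FreeGroup.invRev] at hp
    obtain ⟨b, hb, rfl⟩ := hp
    rfl

theorem aux (x : α) (k : ℤ) (hk : k ≠ 0) :
    ∀ n (g : FreeGroup α), g.toWord.length ≤ n →
      g * (FreeGroup.of x) ^ k * g⁻¹ ∈ Subgroup.zpowers (FreeGroup.of x) →
      g ∈ Subgroup.zpowers (FreeGroup.of x) := by
  intro n
  induction n with
  | zero =>
    intro g hg _
    have : g.toWord = [] := List.eq_nil_of_length_eq_zero (Nat.le_zero.1 hg)
    rw [FreeGroup.toWord_eq_nil_iff] at this
    rw [this]; exact one_mem _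
  | succ n ih =>
    intro g hg h
    rcases g.toWord.eq_nil_or_concat with hnil | ⟨L, ⟨c, b⟩, hL⟩
    · rw [FreeGroup.toWord_eq_nil_iff] at hnil
      rw [hnil]; exact one_mem _
    replace hL : g.toWord = L ++ [(c, b)] := by simpa using hL
    by_cases hcx : c = x
    · subst hcx
      set u : FreeGroup α := FreeGroup.mk [(c, b)] with hu_def
      have hgu : g = FreeGroup.mk L * u := by
        conv_lhs => rw [← FreeGroup.mk_toWord (x := g), hL]
        rw [FreeGroup.mul_mk]
      have hu : u ∈ Subgroup.zpowers (FreeGroup.of c) := by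
        cases b
        · refine ⟨-1, ?_⟩
          show (FreeGroup.of c : FreeGroup α) ^ (-1 : ℤ) = u
          rw [zpow_neg_one, show (FreeGroup.of c : FreeGroup α) = FreeGroup.mk [(c, true)] from rfl,
            FreeGroup.inv_mk]
          rfl
        · exact ⟨1, by show (FreeGroup.of c : FreeGroup α) ^ (1 : ℤ) = u; rw [zpow_one]; rfl⟩
      obtain ⟨mu, hmu⟩ := hu
      have hcomm : u * (FreeGroup.of c) ^ k * u⁻¹ = (FreeGroup.of c) ^ k := by
        rw [← hmu]; group
      have hLred : (FreeGroup.mk L).toWord = L := by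
        rw [FreeGroup.toWord_mk]
        exact reduce_eq_self_of_chain'
          ((chain'_toWord g).prefix ⟨[(c, b)], hL.symm⟩)
      have hlen : (FreeGroup.mk L).toWord.length ≤ n := by
        rw [hLred]
        have := hg
        rw [hL, List.length_append, List.length_singleton] at this
        omega
      have hconj : FreeGroup.mk L * (FreeGroup.of c) ^ k * (FreeGroup.mk L)⁻¹ =
          g * (FreeGroup.of c) ^ k * g⁻¹ := by
        rw [hgu, mul_inv_rev]
        conv_lhs => rw [← hcomm]
        group
      have hL_mem := ih (FreeGroup.mk L) hlen (by rw [hconj]; exact h)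
      rw [hgu]
      exact mul_mem hL_mem ⟨mu, hmu⟩
    · exfalso
      obtain ⟨m, s, hm0, hmid⟩ : ∃ m s, m ≠ 0 ∧
          ((FreeGroup.of x : FreeGroup α) ^ k).toWord = List.replicate m (x, s) := by
        rcases k with p | p
        · refine ⟨p, true, by simpa using hk, ?_⟩
          rw [Int.ofNat_eq_coe, zpow_natCast, FreeGroup.toWord_of_pow]
        · refine ⟨p + 1, false, Nat.succ_ne_zero p, ?_⟩
          rw [zpow_negSucc, FreeGroup.toWord_inv, FreeGroup.toWord_of_pow]
          simp [FreeGroup.invRev]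
      obtain ⟨m', rfl⟩ := Nat.exists_eq_succ_of_ne_zero hm0
      have hinv : (g⁻¹).toWord =
          (c, !b) :: (L.map (fun p : α × Bool => (p.1, !p.2))).reverse := by
        rw [FreeGroup.toWord_inv, hL]
        simp [FreeGroup.invRev]
      have hWchain : List.Chain' Rd
          (g.toWord ++ (((FreeGroup.of x : FreeGroup α) ^ k).toWord ++ (g⁻¹).toWord)) := by
        rw [List.Chain', List.isChain_append, List.isChain_append]
        refine ⟨chain'_toWord g, ⟨chain'_toWord _, chain'_toWord _, ?_⟩, ?_⟩
        · intro p hp q hq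
          rw [hmid, List.replicate_succ', List.getLast?_concat, Option.mem_some_iff] at hp
          rw [hinv, List.head?_cons, Option.mem_some_iff] at hq
          subst hp; subst hq
          exact fun hcon => hcx (hcon.1.symm)
        · intro p hp q hq
          rw [hL, List.getLast?_concat, Option.mem_some_iff] at hp
          rw [List.head?_append_of_ne_nil, hmid, List.replicate_succ, List.head?_cons,
            Option.mem_some_iff] at hq
          · subst hp; subst hq
            exact fun hcon => hcx hcon.1
          · rw [hmid]; simp
      have hWeq : g * (FreeGroup.of x) ^ k * g⁻¹ =
          FreeGroup.mk (g.toWord ++ (((FreeGroup.of x : FreeGroup α) ^ k).toWord ++ (g⁻¹).toWord)) := by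
        rw [← FreeGroup.mul_mk, ← FreeGroup.mul_mk, FreeGroup.mk_toWord, FreeGroup.mk_toWord,
          FreeGroup.mk_toWord, mul_assoc]
      obtain ⟨l, hl⟩ := h
      have hcb : (c, !b) ∈ ((FreeGroup.of x : FreeGroup α) ^ l).toWord := by
        rw [show (FreeGroup.of x : FreeGroup α) ^ l = g * FreeGroup.of x ^ k * g⁻¹ from hl, hWeq, FreeGroup.toWord_mk, reduce_eq_self_of_chain' hWchain]
        simp [hinv]
      exact hcx (mem_toWord_zpow_fst x l hcb)

end MalnormalAux

theorem freeGroup_basis_zpowers_malnormal {α : Type*} (x : α)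
    (g : FreeGroup α) (k : ℤ) (hk : k ≠ 0)
    (h : g * (FreeGroup.of x) ^ k * g⁻¹ ∈ Subgroup.zpowers (FreeGroup.of x)) :
    g ∈ Subgroup.zpowers (FreeGroup.of x) := by
  classical
  exact MalnormalAux.aux x k hk g.toWord.length g le_rfl h
end
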